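/- Let n ≥ 2 and let V ⊆ ℝ^n be open with Y_V := V ∩ {x_n = 0} nonempty and connected. Given N ∈ ℕ and, for each multi-index α ∈ ℕ^n with |α| ≤ N, a smooth function a_α : Y_V → ℂ, define the operator D f := Σ_{|α| ≤ N} a_α · (∂^α f)|_{Y_V} for smooth f : V → ℂ. If for every smooth f : V → ℂ and every 1 ≤ k ≤ n−1 one has D(∂_k f) = ∂_k(D f) on Y_V (where ∂_k(D f) is the derivative of the function D f in the direction e_k within the hyperplane), then every coefficient a_α is constant on Y_V. (Step 2 of the proof of Theorems A and B: covariance under the translations along the hyperplane, which are Killing vector fields, forces constant coefficients.) -/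

import Mathlib

open scoped BigOperators

noncomputable section

/-- The `j`-th partial derivative. -/
def pd {n : ℕ} {E : Type} [NormedAddCommGroup E] [NormedSpace ℝ E]
    (j : Fin n) (f : (Fin n → ℝ) → E) : (Fin n → ℝ) → E :=
  fun x => fderiv ℝ f x (Pi.single j 1)

/-- The differential operator `∂^m = ∂_1^{m 1} ⋯ ∂_n^{m n}` attached to a
multi-index `m`. -/
def monoDiff {n : ℕ} (m : Fin n → ℕ) (f : (Fin n → ℝ) → ℂ) : (Fin n → ℝ) → ℂ :=
  (List.finRange n).foldr (fun j g => (pd j)^[m j] g) f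

/-- The finite set of multi-indices `m : Fin n → ℕ` of total degree `|m| ≤ N`. -/
def multiIdx (n N : ℕ) : Finset (Fin n → ℕ) :=
  (Finset.Iic (fun _ => N)).filter (fun m => ∑ j, m j ≤ N)

/-- one-variable factor -/
def fac (q d : ℕ) (c : ℝ) (t : ℝ) : ℂ :=
  ((q.descFactorial d : ℂ)) * ((t : ℂ) - (c : ℂ)) ^ (q - d)

def G {n : ℕ} (q d : Fin n → ℕ) (c : Fin n → ℝ) : (Fin n → ℝ) → ℂ :=
  fun x => ∏ i, fac (q i) (d i) (c i) (x i)

lemma ofReal_hasDerivAt {t : ℝ} : HasDerivAt (fun s : ℝ => (s : ℂ)) 1 t := by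
  simpa using (hasDerivAt_id t).ofReal_comp

lemma pow_hasDerivAt (e : ℕ) (c : ℝ) (t : ℝ) :
    HasDerivAt (fun s : ℝ => ((s : ℂ) - c) ^ e) ((e : ℂ) * ((t : ℂ) - c) ^ (e - 1)) t := by
  induction e with
  | zero => simpa using hasDerivAt_const t (1 : ℂ)
  | succ e ih =>
      have h2 : HasDerivAt (fun s : ℝ => ((s : ℂ) - c)) 1 t := ofReal_hasDerivAt.sub_const _
      have := ih.mul h2
      have heq : ∀ s : ℝ, ((s:ℂ) - c) ^ (e+1) = ((s:ℂ) - c) ^ e * ((s:ℂ) - c) := fun s => pow_succ _ _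
      rw [show (fun s : ℝ => ((s:ℂ) - c) ^ (e+1)) = fun s : ℝ => ((s:ℂ) - c) ^ e * ((s:ℂ) - c) from funext heq]
      refine this.congr_deriv ?_
      cases e with
      | zero => simp
      | succ e' => rw [Nat.add_sub_cancel, Nat.add_sub_cancel]; push_cast; ring

lemma fac_hasDerivAt (q d : ℕ) (c : ℝ) (t : ℝ) :
    HasDerivAt (fac q d c) (fac q (d+1) c t) t := by
  have h3 := (pow_hasDerivAt (q - d) c t).const_mul ((q.descFactorial d : ℂ))
  refine h3.congr_deriv ?_
  simp only [fac, Nat.descFactorial_succ]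
  push_cast
  rw [Nat.sub_sub]
  ring

lemma G_hasFDerivAt {n : ℕ} (q d : Fin n → ℕ) (c : Fin n → ℝ) (x : Fin n → ℝ) :
    HasFDerivAt (G q d c)
      (∑ i, (∏ l ∈ Finset.univ.erase i, fac (q l) (d l) (c l) (x l)) •
        ((fac (q i) (d i + 1) (c i) (x i)) • (ContinuousLinearMap.proj i :
          (Fin n → ℝ) →L[ℝ] ℝ).smulRight (1 : ℂ))) x := by
  have h : ∀ i ∈ Finset.univ, HasFDerivAt (fun y : Fin n → ℝ => fac (q i) (d i) (c i) (y i))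
      ((fac (q i) (d i + 1) (c i) (x i)) • (ContinuousLinearMap.proj i :
        (Fin n → ℝ) →L[ℝ] ℝ).smulRight (1 : ℂ)) x := by
    intro i _
    have hp : HasFDerivAt (fun y : Fin n → ℝ => y i)
        (ContinuousLinearMap.proj i : (Fin n → ℝ) →L[ℝ] ℝ) x := by
      exact (ContinuousLinearMap.proj (R := ℝ) (φ := fun _ : Fin n => ℝ) i).hasFDerivAt
    have hd := (fac_hasDerivAt (q i) (d i) (c i) (x i)).hasFDerivAt
    have := hd.comp x hp
    refine this.congr_fderiv ?_
    ext v
    simp [ContinuousLinearMap.smulRight_apply, smul_eq_mul]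
    ring
  exact HasFDerivAt.finset_prod h

lemma pd_G {n : ℕ} (q d : Fin n → ℕ) (c : Fin n → ℝ) (j : Fin n) :
    pd j (G q d c) = G q (Function.update d j (d j + 1)) c := by
  funext x
  have h := G_hasFDerivAt q d c x
  unfold pd
  rw [h.fderiv]
  rw [ContinuousLinearMap.sum_apply]
  rw [Finset.sum_eq_single j]
  · simp only [ContinuousLinearMap.smul_apply, ContinuousLinearMap.smulRight_apply,
      ContinuousLinearMap.proj_apply, Pi.single_eq_same, one_smul, smul_eq_mul]
    unfold G
    have hpr : ∏ i ∈ Finset.univ.erase j, fac (q i) (Function.update d j (d j + 1) i) (c i) (x i)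
        = ∏ i ∈ Finset.univ.erase j, fac (q i) (d i) (c i) (x i) :=
      Finset.prod_congr rfl fun i hi => by
        rw [Function.update_of_ne (Finset.ne_of_mem_erase hi)]
    rw [← Finset.mul_prod_erase Finset.univ _ (Finset.mem_univ j), Function.update_self, hpr]
    ring
  · intro i _ hij
    simp [Pi.single_eq_of_ne' hij.symm, Pi.single_apply, hij.symm]
  · intro h; exact absurd (Finset.mem_univ j) h

lemma pd_iter_G {n : ℕ} (q : Fin n → ℕ) (c : Fin n → ℝ) (j : Fin n) (r : ℕ) (d : Fin n → ℕ) :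
    (pd j)^[r] (G q d c) = G q (Function.update d j (d j + r)) c := by
  induction r with
  | zero => simp [Function.update_eq_self]
  | succ r ih =>
      rw [Function.iterate_succ_apply', ih, pd_G]
      rw [show Function.update (Function.update d j (d j + r)) j
          (Function.update d j (d j + r) j + 1) = Function.update d j (d j + (r + 1)) by
        rw [Function.update_idem, Function.update_self, Nat.add_assoc]]

lemma foldr_G {n : ℕ} (q m : Fin n → ℕ) (c : Fin n → ℝ) (L : List (Fin n)) (hL : L.Nodup)
    (d : Fin n → ℕ) :
    L.foldr (fun j g => (pd j)^[m j] g) (G q d c)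
      = G q (fun i => d i + if i ∈ L then m i else 0) c := by
  induction L generalizing d with
  | nil => simp
  | cons j L' ih =>
      have hj : j ∉ L' := (List.nodup_cons.mp hL).1
      rw [List.foldr_cons, ih ((List.nodup_cons.mp hL).2), pd_iter_G]
      have hupd : Function.update (fun i => d i + if i ∈ L' then m i else 0) j
          ((d j + if j ∈ L' then m j else 0) + m j)
          = fun i => d i + if i ∈ j :: L' then m i else 0 := by
        funext i
        by_cases hij : i = j
        · subst hij; rw [Function.update_self]; simp [hj]
        · rw [Function.update_of_ne hij]; simp [List.mem_cons, hij]
      rw [hupd]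

lemma monoDiff_G {n : ℕ} (q m d : Fin n → ℕ) (c : Fin n → ℝ) :
    monoDiff m (G q d c) = G q (fun i => d i + m i) c := by
  unfold monoDiff
  rw [foldr_G q m c _ (List.nodup_finRange n) d]
  rw [show (fun i => d i + if i ∈ List.finRange n then m i else 0) = fun i => d i + m i from
    funext fun i => by simp [List.mem_finRange]]

lemma G_eval_self {n : ℕ} (q d : Fin n → ℕ) (y : Fin n → ℝ) :
    G q d y y = if d = q then (∏ i, (Nat.factorial (q i) : ℂ)) else 0 := by
  unfold G fac
  have hfac : ∀ i : Fin n, ((q i).descFactorial (d i) : ℂ) * ((y i : ℂ) - (y i : ℂ)) ^ (q i - d i)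
      = if d i = q i then (Nat.factorial (q i) : ℂ) else 0 := by
    intro i
    rw [sub_self]
    rcases Nat.lt_trichotomy (d i) (q i) with h | h | h
    · rw [zero_pow (by omega), if_neg (by omega)]; ring
    · rw [h, Nat.sub_self, pow_zero, Nat.descFactorial_self, if_pos rfl, mul_one]
    · rw [Nat.descFactorial_eq_zero_iff_lt.mpr h, if_neg (by omega)]; push_cast; ring
  rw [Finset.prod_congr rfl fun i _ => hfac i]
  by_cases h : d = q
  · subst h; simp
  · rw [if_neg h]
    obtain ⟨i, hi⟩ := Function.ne_iff.mp h
    exact Finset.prod_eq_zero (Finset.mem_univ i) (if_neg hi)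

lemma G_contDiff {n : ℕ} (q d : Fin n → ℕ) (c : Fin n → ℝ) : ContDiff ℝ (⊤ : ℕ∞) (G q d c) := by
  apply contDiff_prod (t := Finset.univ)
  intro i _
  unfold fac
  apply ContDiff.mul contDiff_const
  apply ContDiff.pow
  apply ContDiff.sub _ contDiff_const
  exact Complex.ofRealCLM.contDiff.comp (contDiff_apply ℝ ℝ i)

lemma hfac0 (q d : ℕ) :
    ((q.descFactorial d : ℂ)) * (0 : ℂ) ^ (q - d)
      = if d = q then (Nat.factorial q : ℂ) else 0 := by
  rcases Nat.lt_trichotomy d q with h | h | h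
  · rw [zero_pow (by omega), if_neg (by omega)]; ring
  · rw [h, Nat.sub_self, pow_zero, Nat.descFactorial_self, if_pos rfl, mul_one]
  · rw [Nat.descFactorial_eq_zero_iff_lt.mpr h, if_neg (by omega)]; push_cast; ring

lemma G_line {n : ℕ} (q m : Fin n → ℕ) (y : Fin n → ℝ) (k : Fin n) :
    (fun t : ℝ => G q m y (y + t • (Pi.single k 1 : Fin n → ℝ)))
      = fun t => (∏ i ∈ Finset.univ.erase k,
          ((q i).descFactorial (m i) : ℂ) * (0:ℂ) ^ (q i - m i)) * fac (q k) (m k) 0 t := by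
  funext t
  unfold G
  rw [← Finset.mul_prod_erase Finset.univ _ (Finset.mem_univ k), mul_comm]
  congr 1
  · apply Finset.prod_congr rfl
    intro i hi
    have hik : i ≠ k := Finset.ne_of_mem_erase hi
    unfold fac
    congr 1
    have : (y + t • (Pi.single k 1 : Fin n → ℝ)) i = y i := by
      simp [Pi.single_apply, hik]
    rw [this, sub_self]
  · unfold fac
    have : (y + t • (Pi.single k 1 : Fin n → ℝ)) k = y k + t := by simp
    rw [this]
    push_cast
    ring_nf

lemma key_ite {n : ℕ} (q m : Fin n → ℕ) (k : Fin n) :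
    (∏ i ∈ Finset.univ.erase k,
        ((q i).descFactorial (m i) : ℂ) * (0:ℂ) ^ (q i - m i)) * fac (q k) (m k + 1) 0 0
      = if (fun i => Function.update (fun _ => (0:ℕ)) k 1 i + m i) = q
        then ∏ i, (Nat.factorial (q i) : ℂ) else 0 := by
  have hfck : fac (q k) (m k + 1) 0 0
      = if m k + 1 = q k then (Nat.factorial (q k) : ℂ) else 0 := by
    unfold fac; rw [show ((0:ℝ):ℂ) - ((0:ℝ):ℂ) = 0 by norm_num, hfac0]
  by_cases hc : (fun i => Function.update (fun _ => (0:ℕ)) k 1 i + m i) = q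
  · have hk : 1 + m k = q k := by
      have := congrFun hc k; simpa [Function.update_self] using this
    have hi : ∀ i, i ≠ k → m i = q i := by
      intro i hik
      have := congrFun hc i
      simpa [Function.update_of_ne hik] using this
    rw [if_pos hc, hfck, if_pos (by omega)]
    rw [← Finset.mul_prod_erase Finset.univ _ (Finset.mem_univ k), mul_comm]
    congr 1
    apply Finset.prod_congr rfl
    intro i hik
    rw [hfac0, if_pos (hi i (Finset.ne_of_mem_erase hik))]
  · rw [if_neg hc]
    obtain ⟨i, hi⟩ := Function.ne_iff.mp hc
    by_cases hik : i = k
    · subst hik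
      rw [Function.update_self] at hi
      rw [hfck, if_neg (by omega), mul_zero]
    · rw [Function.update_of_ne hik, zero_add] at hi
      rw [Finset.prod_eq_zero (Finset.mem_erase.mpr ⟨hik, Finset.mem_univ i⟩)
        (by rw [hfac0, if_neg hi]), zero_mul]

lemma lineDeriv_vanish {n N : ℕ} (hn : 2 ≤ n) (V : Set (Fin n → ℝ)) (hV : IsOpen V)
    (a : (Fin n → ℕ) → (Fin n → ℝ) → ℂ)
    (ha : ∀ m ∈ multiIdx n N,
      ContDiffOn ℝ (⊤ : ℕ∞) (a m) (V ∩ {x | x ⟨n - 1, Nat.sub_lt (by omega) Nat.one_pos⟩ = 0}))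
    (D : ((Fin n → ℝ) → ℂ) → (Fin n → ℝ) → ℂ)
    (hD : ∀ f x, D f x = ∑ m ∈ multiIdx n N, a m x * monoDiff m f x)
    (hcomm : ∀ f : (Fin n → ℝ) → ℂ, ContDiffOn ℝ (⊤ : ℕ∞) f V →
      ∀ k : Fin n, k ≠ ⟨n - 1, Nat.sub_lt (by omega) Nat.one_pos⟩ →
      ∀ x ∈ V, x ⟨n - 1, Nat.sub_lt (by omega) Nat.one_pos⟩ = 0 →
        D (pd k f) x = lineDeriv ℝ (D f) x (Pi.single k 1))
    (q : Fin n → ℕ) (hq : q ∈ multiIdx n N)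
    (y : Fin n → ℝ) (hyV : y ∈ V) (hyH : y ⟨n - 1, Nat.sub_lt (by omega) Nat.one_pos⟩ = 0)
    (k : Fin n) (hk : k ≠ ⟨n - 1, Nat.sub_lt (by omega) Nat.one_pos⟩) :
    deriv (fun t : ℝ => a q (y + t • (Pi.single k 1 : Fin n → ℝ))) 0 = 0 := by
  set lastIdx : Fin n := ⟨n - 1, Nat.sub_lt (by omega) Nat.one_pos⟩ with hlast
  set YV : Set (Fin n → ℝ) := V ∩ {x | x lastIdx = 0} with hYV
  set v : Fin n → ℝ := Pi.single k 1 with hv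
  set ℓ : ℝ → (Fin n → ℝ) := fun t => y + t • v with hℓ
  have hℓ0 : ℓ 0 = y := by simp [hℓ]
  have hℓcont : Continuous ℓ := continuous_const.add (continuous_id.smul continuous_const)
  have hℓH : ∀ t, ℓ t lastIdx = 0 := by
    intro t
    have : v lastIdx = 0 := by
      rw [hv, Pi.single_apply, if_neg (fun h => hk h.symm)]
    simp [hℓ, this, hyH]
  have hpre : ℓ ⁻¹' YV ∈ nhds (0 : ℝ) := by
    have h1 : ℓ ⁻¹' V ∈ nhds (0 : ℝ) :=
      (hV.preimage hℓcont).mem_nhds (by rw [Set.mem_preimage, hℓ0]; exact hyV)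
    have : ℓ ⁻¹' YV = ℓ ⁻¹' V := by
      ext t
      simp only [hYV, Set.preimage_inter, Set.mem_inter_iff, Set.mem_preimage, Set.mem_setOf_eq]
      exact ⟨fun h => h.1, fun h => ⟨h, hℓH t⟩⟩
    rw [this]; exact h1
  -- differentiability of the coefficients along the line
  have hbm : ∀ m ∈ multiIdx n N, DifferentiableAt ℝ (fun t => a m (ℓ t)) 0 := by
    intro m hm
    have hw : DifferentiableWithinAt ℝ (a m) YV y :=
      ((ha m hm).differentiableOn (by simp)) y ⟨hyV, hyH⟩
    have hld : DifferentiableAt ℝ ℓ 0 :=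
      ((differentiableAt_id).smul_const v).const_add y
    have hw' : DifferentiableWithinAt ℝ (a m) YV (ℓ 0) := hℓ0 ▸ hw
    have hcomp : DifferentiableWithinAt ℝ (fun t => a m (ℓ t)) (ℓ ⁻¹' YV) 0 :=
      hw'.comp (t := YV) 0 hld.differentiableWithinAt (Set.mapsTo_preimage ℓ YV)
    exact hcomp.differentiableAt hpre
  -- the polynomial test function
  set f : (Fin n → ℝ) → ℂ := G q (fun _ => 0) y with hf
  have hfsmooth : ContDiffOn ℝ (⊤ : ℕ∞) f V := (G_contDiff q _ y).contDiffOn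
  -- derivative of each summand along the line
  set Km : (Fin n → ℕ) → ℂ := fun m => ∏ i ∈ Finset.univ.erase k,
      ((q i).descFactorial (m i) : ℂ) * (0:ℂ) ^ (q i - m i) with hKm
  have hψ : ∀ m : Fin n → ℕ, HasDerivAt (fun t => G q m y (ℓ t))
      (Km m * fac (q k) (m k + 1) 0 0) 0 := by
    intro m
    have := (fac_hasDerivAt (q k) (m k) 0 0).const_mul (Km m)
    have heq : (fun t => G q m y (ℓ t)) = fun t => Km m * fac (q k) (m k) 0 t := G_line q m y k
    rw [heq]
    exact this
  have hφ : ∀ m ∈ multiIdx n N, HasDerivAt (fun t => a m (ℓ t) * G q m y (ℓ t))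
      (deriv (fun t => a m (ℓ t)) 0 * G q m y y
        + a m y * (Km m * fac (q k) (m k + 1) 0 0)) 0 := by
    intro m hm
    have h1 := ((hbm m hm).hasDerivAt).mul (hψ m)
    rw [hℓ0] at h1
    exact h1
  have hsum : HasDerivAt (fun t => ∑ m ∈ multiIdx n N, a m (ℓ t) * G q m y (ℓ t))
      (∑ m ∈ multiIdx n N, (deriv (fun t => a m (ℓ t)) 0 * G q m y y
        + a m y * (Km m * fac (q k) (m k + 1) 0 0))) 0 :=
    HasDerivAt.fun_sum hφ
  -- identification with D f ∘ ℓ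
  have hDf : (fun t => D f (ℓ t)) = fun t => ∑ m ∈ multiIdx n N, a m (ℓ t) * G q m y (ℓ t) := by
    funext t
    rw [hD]
    apply Finset.sum_congr rfl
    intro m _
    rw [hf, monoDiff_G]
    rw [show (fun i => (fun _ : Fin n => 0) i + m i) = m from funext fun i => by simp]
  -- right-hand side of hcomm
  have hRHS : lineDeriv ℝ (D f) y v
      = ∑ m ∈ multiIdx n N, (deriv (fun t => a m (ℓ t)) 0 * G q m y y
        + a m y * (Km m * fac (q k) (m k + 1) 0 0)) := by
    have : lineDeriv ℝ (D f) y v = deriv (fun t => D f (ℓ t)) 0 := rfl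
    rw [this, hDf]
    exact hsum.deriv
  -- left-hand side of hcomm
  have hLHS : D (pd k f) y = ∑ m ∈ multiIdx n N,
      a m y * (Km m * fac (q k) (m k + 1) 0 0) := by
    rw [hD]
    apply Finset.sum_congr rfl
    intro m _
    congr 1
    rw [hf, pd_G, monoDiff_G, G_eval_self, key_ite]
  have hcm := hcomm f hfsmooth k hk y hyV hyH
  rw [hLHS, hRHS] at hcm
  -- cancel the common sum
  have hcancel : ∑ m ∈ multiIdx n N, deriv (fun t => a m (ℓ t)) 0 * G q m y y = 0 := by
    have := hcm
    rw [Finset.sum_add_distrib] at this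
    exact (right_eq_add.mp this)
  -- extract the single term
  rw [Finset.sum_eq_single_of_mem q hq (fun m _ hmq => by
    rw [G_eval_self, if_neg hmq, mul_zero])] at hcancel
  rw [G_eval_self, if_pos rfl] at hcancel
  have hfacne : (∏ i, (Nat.factorial (q i) : ℂ)) ≠ 0 :=
    Finset.prod_ne_zero_iff.mpr fun i _ => by
      exact_mod_cast Nat.cast_ne_zero.mpr (Nat.factorial_ne_zero (q i))
  exact (mul_eq_zero.mp hcancel).resolve_right hfacne

lemma const_on_open_preconnected {E : Type} [NormedAddCommGroup E] [NormedSpace ℝ E]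
    {U : Set E} (hU : IsOpen U) (hUc : IsPreconnected U) {f : E → ℂ}
    (hd : ∀ u ∈ U, DifferentiableAt ℝ f u) (hz : ∀ u ∈ U, fderiv ℝ f u = 0)
    {x y : E} (hx : x ∈ U) (hy : y ∈ U) : f x = f y := by
  have hloc : ∀ w ∈ U, ∃ ε > 0, Metric.ball w ε ⊆ U ∧ ∀ z ∈ Metric.ball w ε, f z = f w := by
    intro w hw
    obtain ⟨ε, hε, hball⟩ := Metric.isOpen_iff.mp hU w hw
    refine ⟨ε, hε, hball, fun z hzb => ?_⟩
    refine (convex_ball w ε).is_const_of_fderivWithin_eq_zero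
      (fun u hu => (hd u (hball hu)).differentiableWithinAt)
      (fun u hu => by rw [fderivWithin_of_isOpen Metric.isOpen_ball hu]; exact hz u (hball hu))
      hzb (Metric.mem_ball_self hε)
  set S : Set E := {u | u ∈ U ∧ f u = f x} with hS
  set T : Set E := {u | u ∈ U ∧ f u ≠ f x} with hT
  have hSopen : IsOpen S := by
    rw [Metric.isOpen_iff]
    intro w hw
    obtain ⟨ε, hε, hball, hconst⟩ := hloc w hw.1
    exact ⟨ε, hε, fun z hz => ⟨hball hz, by rw [hconst z hz, hw.2]⟩⟩
  have hTopen : IsOpen T := by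
    rw [Metric.isOpen_iff]
    intro w hw
    obtain ⟨ε, hε, hball, hconst⟩ := hloc w hw.1
    exact ⟨ε, hε, fun z hz => ⟨hball hz, by rw [hconst z hz]; exact hw.2⟩⟩
  have hsub : U ⊆ S := by
    refine hUc.subset_left_of_subset_union hSopen hTopen ?_ ?_ ⟨x, hx, hx, rfl⟩
    · rw [Set.disjoint_left]
      rintro u ⟨_, hu2⟩ ⟨_, hu4⟩
      exact hu4 hu2
    · intro u hu
      by_cases h : f u = f x
      · exact Or.inl ⟨hu, h⟩
      · exact Or.inr ⟨hu, h⟩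
  rw [(hsub hy).2]

theorem stmt6 (n : ℕ) (hn : 2 ≤ n) (V : Set (Fin n → ℝ)) (hV : IsOpen V)
    (hne : (V ∩ {x | x ⟨n - 1, by omega⟩ = 0}).Nonempty)
    (hconn : IsConnected (V ∩ {x | x ⟨n - 1, by omega⟩ = 0}))
    (N : ℕ) (a : (Fin n → ℕ) → (Fin n → ℝ) → ℂ)
    (ha : ∀ m ∈ multiIdx n N,
      ContDiffOn ℝ (⊤ : ℕ∞) (a m) (V ∩ {x | x ⟨n - 1, by omega⟩ = 0}))
    (D : ((Fin n → ℝ) → ℂ) → (Fin n → ℝ) → ℂ)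
    (hD : ∀ f x, D f x = ∑ m ∈ multiIdx n N, a m x * monoDiff m f x)
    (hcomm : ∀ f : (Fin n → ℝ) → ℂ, ContDiffOn ℝ (⊤ : ℕ∞) f V →
      ∀ k : Fin n, k ≠ ⟨n - 1, by omega⟩ →
      ∀ x ∈ V, x ⟨n - 1, by omega⟩ = 0 →
        D (pd k f) x = lineDeriv ℝ (D f) x (Pi.single k 1)) :
    ∀ m ∈ multiIdx n N, ∀ x ∈ V ∩ {x | x ⟨n - 1, by omega⟩ = 0},
      ∀ y ∈ V ∩ {x | x ⟨n - 1, by omega⟩ = 0}, a m x = a m y := by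
  intro q hq x hx y hy
  have hvan : ∀ z ∈ V, z ⟨n - 1, by omega⟩ = 0 → ∀ k : Fin n, k ≠ ⟨n - 1, by omega⟩ →
      deriv (fun t : ℝ => a q (z + t • (Pi.single k 1 : Fin n → ℝ))) 0 = 0 :=
    fun z hzV hzH k hk => lineDeriv_vanish hn V hV a ha D hD hcomm q hq z hzV hzH k hk
  -- the embedding of ℝ^{n-1} as the hyperplane
  set J : (Fin (n-1) → ℝ) → (Fin n → ℝ) :=
    fun u i => if h : (i : ℕ) < n - 1 then u ⟨i, h⟩ else 0 with hJdef
  set π : (Fin n → ℝ) → (Fin (n-1) → ℝ) :=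
    fun z j => z (Fin.castLE (by omega) j) with hπdef
  have hJH : ∀ u, J u ⟨n - 1, by omega⟩ = 0 := by
    intro u
    simp only [hJdef]
    rw [dif_neg (by simp)]
  have hJπ : ∀ z : Fin n → ℝ, z ⟨n - 1, by omega⟩ = 0 → J (π z) = z := by
    intro z hz
    funext i
    simp only [hJdef, hπdef]
    by_cases h : (i : ℕ) < n - 1
    · rw [dif_pos h]
      exact congrArg z (Fin.ext rfl)
    · rw [dif_neg h]
      have hieq : i = ⟨n - 1, by omega⟩ :=
        Fin.ext (show (i : ℕ) = n - 1 by have h2 := i.isLt; omega)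
      rw [hieq]
      exact hz.symm
  have hπJ : ∀ u, π (J u) = u := by
    intro u
    funext j
    simp only [hJdef, hπdef]
    rw [dif_pos (by simpa using j.isLt)]
    exact congrArg u (Fin.ext rfl)
  have hJcont : Continuous J := by
    apply continuous_pi
    intro i
    by_cases h : (i : ℕ) < n - 1
    · simp only [hJdef, dif_pos h]; exact continuous_apply _
    · simp only [hJdef, dif_neg h]; exact continuous_const
  have hπcont : Continuous π := continuous_pi fun j => continuous_apply _
  have hJdiff : Differentiable ℝ J := by
    apply differentiable_pi.mpr
    intro i
    by_cases h : (i : ℕ) < n - 1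
    · simp only [hJdef, dif_pos h]
      exact (ContinuousLinearMap.proj (R := ℝ) (φ := fun _ : Fin (n-1) => ℝ)
        (⟨i, h⟩ : Fin (n-1))).differentiable
    · simp only [hJdef, dif_neg h]
      exact differentiable_const 0
  have hJadd : ∀ (u : Fin (n-1) → ℝ) (j : Fin (n-1)) (t : ℝ),
      J (u + t • (Pi.single j 1 : Fin (n-1) → ℝ))
        = J u + t • (Pi.single (Fin.castLE (by omega) j) 1 : Fin n → ℝ) := by
    intro u j t
    funext i
    by_cases h : (i : ℕ) < n - 1
    · simp only [hJdef, dif_pos h, Pi.add_apply, Pi.smul_apply, smul_eq_mul]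
      congr 1
      congr 1
      simp only [Pi.single_apply]
      have : (⟨i, h⟩ : Fin (n-1)) = j ↔ i = Fin.castLE (by omega) j := by
        rw [Fin.ext_iff, Fin.ext_iff]
        simp
      by_cases hij : (⟨i, h⟩ : Fin (n-1)) = j
      · rw [if_pos hij, if_pos (this.mp hij)]
      · rw [if_neg hij, if_neg (fun hc => hij (this.mpr hc))]
    · simp only [hJdef, dif_neg h, Pi.add_apply, Pi.smul_apply, smul_eq_mul]
      have hne : i ≠ Fin.castLE (by omega) j := by
        intro hc
        apply h
        rw [hc]
        simpa using j.isLt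
      rw [Pi.single_apply, if_neg hne]
      ring
  set U : Set (Fin (n-1) → ℝ) := J ⁻¹' V with hUdef
  have hUopen : IsOpen U := hV.preimage hJcont
  have hUeq : U = π '' (V ∩ {x | x ⟨n - 1, by omega⟩ = 0}) := by
    ext u
    constructor
    · intro hu
      exact ⟨J u, ⟨hu, hJH u⟩, hπJ u⟩
    · rintro ⟨z, ⟨hzV, hzH⟩, rfl⟩
      simp only [hUdef, Set.mem_preimage]
      rw [hJπ z hzH]
      exact hzV
  have hUconn : IsPreconnected U := by
    rw [hUeq]
    exact (hconn.image π hπcont.continuousOn).isPreconnected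
  set b : (Fin (n-1) → ℝ) → ℂ := fun u => a q (J u) with hbdef
  have hbdiff : ∀ u ∈ U, DifferentiableAt ℝ b u := by
    intro u hu
    have hw : DifferentiableWithinAt ℝ (a q) (V ∩ {x | x ⟨n - 1, by omega⟩ = 0}) (J u) :=
      ((ha q hq).differentiableOn (by simp)) (J u) ⟨hu, hJH u⟩
    have hcomp : DifferentiableWithinAt ℝ b
        (J ⁻¹' (V ∩ {x | x ⟨n - 1, by omega⟩ = 0})) u :=
      hw.comp u (hJdiff u).differentiableWithinAt (Set.mapsTo_preimage J _)
    apply hcomp.differentiableAt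
    have : J ⁻¹' (V ∩ {x | x ⟨n - 1, by omega⟩ = 0}) = U := by
      ext w
      simp only [Set.preimage_inter, Set.mem_inter_iff, Set.mem_preimage, Set.mem_setOf_eq,
        hUdef]
      exact ⟨fun h => h.1, fun h => ⟨h, hJH w⟩⟩
    rw [this]
    exact hUopen.mem_nhds hu
  have hbz : ∀ u ∈ U, fderiv ℝ b u = 0 := by
    intro u hu
    have hsingle : ∀ j : Fin (n-1), fderiv ℝ b u (Pi.single j 1) = 0 := by
      intro j
      have h1 : lineDeriv ℝ b u (Pi.single j 1) = fderiv ℝ b u (Pi.single j 1) :=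
        (hbdiff u hu).lineDeriv_eq_fderiv
      rw [← h1]
      have h2 : lineDeriv ℝ b u (Pi.single j 1)
          = deriv (fun t : ℝ => b (u + t • (Pi.single j 1 : Fin (n-1) → ℝ))) 0 := rfl
      rw [h2]
      have h3 : (fun t : ℝ => b (u + t • (Pi.single j 1 : Fin (n-1) → ℝ)))
          = fun t : ℝ => a q (J u + t • (Pi.single (Fin.castLE (by omega) j) 1 : Fin n → ℝ)) := by
        funext t
        rw [hbdef]
        simp only
        rw [hJadd]
      rw [h3]
      apply hvan (J u) hu (hJH u)
      intro hc
      have := congrArg Fin.val hc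
      simp only [Fin.coe_castLE] at this
      have := j.isLt
      omega
    ext v
    have hv : v = ∑ j, v j • (Pi.single j 1 : Fin (n-1) → ℝ) := by
      have h4 : ∀ j, v j • (Pi.single j 1 : Fin (n-1) → ℝ) = Pi.single j (v j) := by
        intro j
        rw [← Pi.single_smul, smul_eq_mul, mul_one]
      rw [Finset.sum_congr rfl fun j _ => h4 j, Finset.univ_sum_single]
    rw [hv, map_sum]
    simp only [map_smul, hsingle, smul_zero, Finset.sum_const_zero]
    rfl
  have hxU : π x ∈ U := by
    simp only [hUdef, Set.mem_preimage]
    rw [hJπ x hx.2]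
    exact hx.1
  have hyU : π y ∈ U := by
    simp only [hUdef, Set.mem_preimage]
    rw [hJπ y hy.2]
    exact hy.1
  have := const_on_open_preconnected hUopen hUconn hbdiff hbz hxU hyU
  rw [hbdef] at this
  simp only at this
  rw [hJπ x hx.2, hJπ y hy.2] at this
  exact this
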